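/- The set X of all nodal points of the eigenfunctions S(·,λ_n) (over all sufficiently large |n| and all admissible indices j) is dense in the interval [0,π]. -/

import Mathlib

open Real MeasureTheory Set Filter Topology

/-- The conformable fractional derivative of order `α`: `Dᵅ f x = x^(1-α) * f' x`. -/
noncomputable def confDeriv (α : ℝ) (f : ℝ → ℝ) (x : ℝ) : ℝ :=
  x ^ (1 - α) * deriv f x

/-- Admissible nodal indices: `1 ≤ j ≤ n-1` for `n > 0` and `n+1 ≤ j ≤ -1` for `n < 0`. -/
def nodalAdmissible (n j : ℤ) : Prop :=
  (0 < n ∧ 1 ≤ j ∧ j ≤ n - 1) ∨ (n < 0 ∧ n + 1 ≤ j ∧ j ≤ -1)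

/-- Sturm comparison: a positive solution cannot exist on an interval of (conformable)
length at least `π/ω`. -/
private lemma sturm_pos {α ω lam2 a b : ℝ} (hα0 : 0 < α)
    {u u' V : ℝ → ℝ}
    (ha : 0 < a) (hab : a < b)
    (hu : ∀ x ∈ Set.Icc a b, HasDerivAt u (u' x) x)
    (hu2 : ∀ x ∈ Set.Icc a b,
      HasDerivAt (fun y => y ^ (1 - α) * u' y) ((V x - lam2) * u x * x ^ (α - 1)) x)
    (hV : ∀ x ∈ Set.Icc a b, ω ^ 2 ≤ lam2 - V x)
    (hω : 0 < ω)
    (hlen : π / ω ≤ b ^ α / α - a ^ α / α)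
    (hupos : ∀ x ∈ Set.Icc a b, 0 < u x) : False := by
  set t0 : ℝ := a ^ α / α with ht0
  have ht0pos : 0 < t0 := div_pos (Real.rpow_pos_of_pos ha α) hα0
  have hπω : 0 < π / ω := div_pos Real.pi_pos hω
  set c : ℝ := α * (t0 + π / ω) with hc
  have hcpos : 0 < c := mul_pos hα0 (by linarith)
  set b' : ℝ := c ^ (α⁻¹) with hb'
  have hb'pow : b' ^ α = c := Real.rpow_inv_rpow hcpos.le hα0.ne'
  have hb'pos : 0 < b' := Real.rpow_pos_of_pos hcpos _
  have hgb' : b' ^ α / α = t0 + π / ω := by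
    rw [hb'pow, hc]; field_simp
  have haa : α * t0 = a ^ α := by rw [ht0]; field_simp
  have hab' : a < b' := by
    have h1 : a ^ α < b' ^ α := by
      rw [hb'pow, hc, ← haa]
      exact mul_lt_mul_of_pos_left (by linarith) hα0
    exact (Real.rpow_lt_rpow_iff ha.le hb'pos.le hα0).mp h1
  have hb'b : b' ≤ b := by
    have h1 : b' ^ α ≤ b ^ α := by
      rw [hb'pow, hc]
      have h2 : t0 + π / ω ≤ b ^ α / α := by rw [ht0]; linarith
      have := mul_le_mul_of_nonneg_left h2 hα0.le
      calc α * (t0 + π / ω) ≤ α * (b ^ α / α) := this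
        _ = b ^ α := by field_simp
    exact (Real.rpow_le_rpow_iff hb'pos.le (ha.trans hab).le hα0).mp h1
  -- the comparison function
  set θ : ℝ → ℝ := fun y => ω * (y ^ α / α - t0) with hθdef
  set w : ℝ → ℝ := fun y => Real.sin (θ y) with hwdef
  set Pw : ℝ → ℝ := fun y => ω * Real.cos (θ y) with hPwdef
  set W : ℝ → ℝ := fun y => u y * Pw y - (y ^ (1 - α) * u' y) * w y with hWdef
  have hsub : Set.Icc a b' ⊆ Set.Icc a b := Set.Icc_subset_Icc le_rfl hb'b
  -- derivatives
  have hθd : ∀ x ∈ Set.Icc a b', HasDerivAt θ (ω * x ^ (α - 1)) x := by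
    intro x hx
    have hxpos : 0 < x := ha.trans_le hx.1
    have h1 : HasDerivAt (fun y : ℝ => y ^ α) (α * x ^ (α - 1)) x :=
      Real.hasDerivAt_rpow_const (Or.inl hxpos.ne')
    have h2 : HasDerivAt (fun y : ℝ => y ^ α / α - t0) (x ^ (α - 1)) x := by
      have := (h1.div_const α).sub_const t0
      exact this.congr_deriv (mul_div_cancel_left₀ _ hα0.ne')
    exact h2.const_mul ω
  have hwd : ∀ x ∈ Set.Icc a b',
      HasDerivAt w (Real.cos (θ x) * (ω * x ^ (α - 1))) x := by
    intro x hx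
    exact (Real.hasDerivAt_sin (θ x)).comp x (hθd x hx)
  have hPwd : ∀ x ∈ Set.Icc a b',
      HasDerivAt Pw (ω * (-Real.sin (θ x) * (ω * x ^ (α - 1)))) x := by
    intro x hx
    exact ((Real.hasDerivAt_cos (θ x)).comp x (hθd x hx)).const_mul ω
  have hxx : ∀ x : ℝ, 0 < x → x ^ (1 - α) * x ^ (α - 1) = 1 := by
    intro x hx
    rw [← Real.rpow_add hx, show (1 - α) + (α - 1) = 0 by ring, Real.rpow_zero]
  have hWd : ∀ x ∈ Set.Icc a b',
      HasDerivAt W (u x * w x * x ^ (α - 1) * (lam2 - ω ^ 2 - V x)) x := by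
    intro x hx
    have hxpos : 0 < x := ha.trans_le hx.1
    have hxb : x ∈ Set.Icc a b := hsub hx
    have h1 := ((hu x hxb).mul (hPwd x hx)).sub ((hu2 x hxb).mul (hwd x hx))
    refine h1.congr_deriv ?_
    have hone := hxx x hxpos
    simp only [hPwdef, hwdef]
    linear_combination (-(ω * Real.cos (θ x) * u' x)) * hone
  -- W is monotone on [a, b']
  have hWc : ContinuousOn W (Set.Icc a b') := fun x hx =>
    (hWd x hx).continuousAt.continuousWithinAt
  have hWmono : MonotoneOn W (Set.Icc a b') := by
    apply monotoneOn_of_deriv_nonneg (convex_Icc a b') hWc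
    · intro x hx
      rw [interior_Icc] at hx
      exact ((hWd x (Set.Ioo_subset_Icc_self hx)).differentiableAt).differentiableWithinAt
    · intro x hx
      rw [interior_Icc] at hx
      rw [(hWd x (Set.Ioo_subset_Icc_self hx)).deriv]
      have hxpos : 0 < x := ha.trans hx.1
      have hxb : x ∈ Set.Icc a b := hsub (Set.Ioo_subset_Icc_self hx)
      have hθpos : 0 < θ x := by
        have h1 : t0 < x ^ α / α := by
          rw [ht0]
          exact div_lt_div_of_pos_right (Real.rpow_lt_rpow ha.le hx.1 hα0) hα0
        exact mul_pos hω (by linarith)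
      have hθlt : θ x < π := by
        have h1 : x ^ α / α < t0 + π / ω := by
          rw [← hgb']
          exact div_lt_div_of_pos_right (Real.rpow_lt_rpow hxpos.le hx.2 hα0) hα0
        have h2 : θ x < ω * (π / ω) := by
          apply mul_lt_mul_of_pos_left _ hω
          linarith
        rwa [mul_div_cancel₀ _ hω.ne'] at h2
      have hwpos : 0 < w x := Real.sin_pos_of_pos_of_lt_pi hθpos hθlt
      have hu0 : 0 < u x := hupos x hxb
      have hxm : (0:ℝ) < x ^ (α - 1) := Real.rpow_pos_of_pos hxpos _
      have hV0 : 0 ≤ lam2 - ω ^ 2 - V x := by linarith [hV x hxb]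
      positivity
  -- evaluate W at the endpoints
  have hθa : θ a = 0 := by simp [hθdef, ht0]
  have hθb' : θ b' = π := by
    simp only [hθdef]
    rw [hgb']
    field_simp
    ring
  have hWa : W a = u a * ω := by
    simp only [hWdef, hwdef, hPwdef, hθa, Real.cos_zero, Real.sin_zero, mul_zero,
      sub_zero, mul_one]
  have hWb' : W b' = -(u b' * ω) := by
    simp only [hWdef, hwdef, hPwdef, hθb', Real.cos_pi, Real.sin_pi, mul_zero, sub_zero]
    ring
  have hmem_a : a ∈ Set.Icc a b' := ⟨le_rfl, hab'.le⟩
  have hmem_b' : b' ∈ Set.Icc a b' := ⟨hab'.le, le_rfl⟩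
  have := hWmono hmem_a hmem_b' hab'.le
  rw [hWa, hWb'] at this
  have hua : 0 < u a := hupos a ⟨le_rfl, hab.le⟩
  have hub' : 0 < u b' := hupos b' ⟨hab'.le, hb'b⟩
  nlinarith

/-- Existence of a zero in an interval of sufficient conformable length. -/
private lemma sturm_exists_zero {α ω lam2 a b : ℝ} (hα0 : 0 < α)
    {u u' V : ℝ → ℝ}
    (ha : 0 < a) (hab : a < b)
    (hu : ∀ x ∈ Set.Icc a b, HasDerivAt u (u' x) x)
    (hu2 : ∀ x ∈ Set.Icc a b,
      HasDerivAt (fun y => y ^ (1 - α) * u' y) ((V x - lam2) * u x * x ^ (α - 1)) x)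
    (hV : ∀ x ∈ Set.Icc a b, ω ^ 2 ≤ lam2 - V x)
    (hω : 0 < ω)
    (hlen : π / ω ≤ b ^ α / α - a ^ α / α) :
    ∃ x ∈ Set.Icc a b, u x = 0 := by
  by_contra h
  push_neg at h
  have hcont : ContinuousOn u (Set.Icc a b) := fun x hx =>
    (hu x hx).continuousAt.continuousWithinAt
  have hsign : (∀ x ∈ Set.Icc a b, 0 < u x) ∨ (∀ x ∈ Set.Icc a b, u x < 0) := by
    have hmem_a : a ∈ Set.Icc a b := ⟨le_rfl, hab.le⟩
    rcases lt_or_gt_of_ne (h a hmem_a) with hneg | hpos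
    · right
      intro x hx
      by_contra hux
      push_neg at hux
      have hux' : 0 < u x := lt_of_le_of_ne hux (Ne.symm (h x hx))
      have hsub : Set.Icc a x ⊆ Set.Icc a b := Set.Icc_subset_Icc le_rfl hx.2
      have := intermediate_value_Icc hx.1 (hcont.mono hsub)
      have h0 : (0:ℝ) ∈ Set.Icc (u a) (u x) := ⟨hneg.le, hux'.le⟩
      obtain ⟨y, hy, hy0⟩ := this h0
      exact h y (hsub hy) hy0
    · left
      intro x hx
      by_contra hux
      push_neg at hux
      have hux' : u x < 0 := lt_of_le_of_ne hux (h x hx)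
      have hsub : Set.Icc a x ⊆ Set.Icc a b := Set.Icc_subset_Icc le_rfl hx.2
      have := intermediate_value_Icc' hx.1 (hcont.mono hsub)
      have h0 : (0:ℝ) ∈ Set.Icc (u x) (u a) := ⟨hux'.le, hpos.le⟩
      obtain ⟨y, hy, hy0⟩ := this h0
      exact h y (hsub hy) hy0
  rcases hsign with hpos | hneg
  · exact sturm_pos hα0 ha hab hu hu2 hV hω hlen hpos
  · refine sturm_pos (u := fun y => -u y) (u' := fun y => -u' y) (V := V)
      hα0 ha hab ?_ ?_ hV hω hlen ?_
    · intro x hx; exact (hu x hx).neg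
    · intro x hx
      have := (hu2 x hx).neg
      have heq : (fun y => -(y ^ (1 - α) * u' y)) = (fun y => y ^ (1 - α) * -u' y) := by
        funext y; ring
      rw [show (-fun y => y ^ (1 - α) * u' y) = (fun y => -(y ^ (1 - α) * u' y)) from rfl, heq] at this
      exact this.congr_deriv (by ring)
    · intro x hx
      simpa using (hneg x hx)

set_option maxHeartbeats 1600000 in
/-- **Density of the nodal set (Corollary 2).**
The set `X` of all nodal points `x_n^j` (over all sufficiently large `|n|` and admissible `j`)
is dense in `[0,π]`. -/
theorem nodal_set_dense
    (α : ℝ) (hα : α ∈ Set.Ioc (0 : ℝ) 1)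
    (p p' q : ℝ → ℝ)
    (hp : ∀ x ∈ Set.Icc 0 π, HasDerivAt p (p' x) x)
    (hp' : ContinuousOn p' (Set.Icc 0 π))
    (hq : ContinuousOn q (Set.Icc 0 π))
    (hpnc : ¬ ∃ c : ℝ, ∀ x ∈ Set.Icc 0 π, p x = c)
    (hpint : (∫ t in (0:ℝ)..π, t ^ (α - 1) * p t) = 0)
    (S : ℝ → ℝ → ℝ)
    (hSsmooth : ∀ l : ℝ, ContDiffOn ℝ 2 (S l) (Set.Ioo 0 π))
    (hScont : ∀ l : ℝ, ContinuousOn (S l) (Set.Icc 0 π))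
    (hSeq : ∀ l : ℝ, ∀ x ∈ Set.Ioo 0 π,
      -(confDeriv α (confDeriv α (S l)) x) + (2 * l * p x + q x) * S l x = l ^ 2 * S l x)
    (hS0 : ∀ l : ℝ, S l 0 = 0)
    (hS0' : ∀ l : ℝ, Tendsto (confDeriv α (S l)) (𝓝[>] (0:ℝ)) (𝓝 1))
    (lam : ℤ → ℝ) (N₀ : ℕ)
    (hzero : ∀ n : ℤ, n ≠ 0 → N₀ ≤ n.natAbs → S (lam n) π = 0)
    (hloc : ∀ n : ℤ, n ≠ 0 → N₀ ≤ n.natAbs → |lam n - n * α / π ^ (α - 1)| ≤ 1)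
    (X : ℤ → ℤ → ℝ)
    (hXnode : ∀ n : ℤ, n ≠ 0 → N₀ ≤ n.natAbs → ∀ j : ℤ, nodalAdmissible n j →
      X n j ∈ Set.Ioo (0:ℝ) π ∧ S (lam n) (X n j) = 0)
    (hXall : ∀ n : ℤ, n ≠ 0 → N₀ ≤ n.natAbs → ∀ x ∈ Set.Ioo (0:ℝ) π,
      S (lam n) x = 0 → ∃ j : ℤ, nodalAdmissible n j ∧ X n j = x) :
    Set.Icc (0:ℝ) π ⊆
      closure {x : ℝ | ∃ n j : ℤ, n ≠ 0 ∧ N₀ ≤ n.natAbs ∧ nodalAdmissible n j ∧ X n j = x} := by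
  obtain ⟨hα0, hα1⟩ := hα
  intro x₀ hx₀
  rw [Metric.mem_closure_iff]
  intro ε hε
  -- choose a small interval [a,b] ⊆ (0,π) near x₀
  set δ : ℝ := min (ε / 4) (π / 4) with hδdef
  have hδpos : 0 < δ := lt_min (by linarith) (by linarith [Real.pi_pos])
  have hδε : δ ≤ ε / 4 := min_le_left _ _
  have hδπ : δ ≤ π / 4 := min_le_right _ _
  set y : ℝ := min (max x₀ δ) (π - δ) with hydef
  have hyδ : δ ≤ y := le_min (le_max_right _ _) (by linarith [Real.pi_pos])
  have hyπ : y ≤ π - δ := min_le_right _ _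
  have hyx₀ : |y - x₀| ≤ δ := by
    rw [abs_le]
    constructor
    · have h1 : x₀ - δ ≤ max x₀ δ := le_trans (by linarith) (le_max_left _ _)
      have h2 : x₀ - δ ≤ π - δ := by linarith [hx₀.2]
      have := le_min h1 h2
      linarith [this]
    · have h1 : y ≤ max x₀ δ := min_le_left _ _
      have h2 : max x₀ δ ≤ x₀ + δ := max_le (by linarith) (by linarith [hx₀.1])
      linarith
  set a : ℝ := y - δ / 2 with hadef
  set b : ℝ := y + δ / 2 with hbdef
  have ha : 0 < a := by simp only [hadef]; linarith
  have hab : a < b := by simp only [hadef, hbdef]; linarith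
  have hbπ : b < π := by simp only [hbdef]; linarith
  have hIccsub : Set.Icc a b ⊆ Set.Ioo 0 π := fun x hx =>
    ⟨lt_of_lt_of_le ha hx.1, lt_of_le_of_lt hx.2 hbπ⟩
  have hIccsub' : Set.Icc a b ⊆ Set.Icc 0 π := fun x hx =>
    ⟨(hIccsub hx).1.le, (hIccsub hx).2.le⟩
  have hnear : ∀ x ∈ Set.Icc a b, |x₀ - x| < ε := by
    intro x hx
    have h1 : |x - y| ≤ δ / 2 := by
      obtain ⟨hxa, hxb⟩ := hx
      rw [hadef] at hxa
      rw [hbdef] at hxb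
      rw [abs_le]
      constructor <;> linarith
    have : |x₀ - x| ≤ |x₀ - y| + |y - x| := abs_sub_le _ _ _
    rw [abs_sub_comm x₀ y] at this
    rw [abs_sub_comm y x] at this
    linarith [hyx₀, h1]
  -- conformable length of [a,b]
  set L : ℝ := b ^ α / α - a ^ α / α with hLdef
  have hLpos : 0 < L := by
    have := Real.rpow_lt_rpow ha.le hab hα0
    simp only [hLdef]
    have := div_lt_div_of_pos_right this hα0
    linarith
  -- bounds on p and q
  have hpc : ContinuousOn p (Set.Icc 0 π) := fun x hx =>
    (hp x hx).continuousAt.continuousWithinAt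
  obtain ⟨Pb, hPb⟩ := isCompact_Icc.exists_bound_of_continuousOn hpc
  obtain ⟨Qb, hQb⟩ := isCompact_Icc.exists_bound_of_continuousOn hq
  set P1 : ℝ := max Pb 0 with hP1def
  set Q1 : ℝ := max Qb 0 with hQ1def
  have hP1 : ∀ x ∈ Set.Icc (0:ℝ) π, |p x| ≤ P1 := fun x hx =>
    le_trans (hPb x hx) (le_max_left _ _)
  have hQ1 : ∀ x ∈ Set.Icc (0:ℝ) π, |q x| ≤ Q1 := fun x hx =>
    le_trans (hQb x hx) (le_max_left _ _)
  have hP1n : 0 ≤ P1 := le_max_right _ _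
  have hQ1n : 0 ≤ Q1 := le_max_right _ _
  -- choose n large
  set K : ℝ := (π / L) ^ 2 with hKdef
  have hKn : 0 ≤ K := sq_nonneg _
  set T : ℝ := 2 * P1 + Q1 + K + 2 with hTdef
  have hT1 : 1 ≤ T := by simp only [hTdef]; linarith
  obtain ⟨N, hN⟩ := exists_nat_ge ((T + 1) / α)
  set m : ℕ := max N (max N₀ 1) with hmdef
  set n : ℤ := (m : ℤ) with hndef
  have hm1 : 1 ≤ m := le_trans (le_max_right _ _) (le_max_right _ _)
  have hn0 : n ≠ 0 := by
    simp only [hndef]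
    exact_mod_cast Nat.one_le_iff_ne_zero.mp hm1
  have hnN₀ : N₀ ≤ n.natAbs := by
    simp only [hndef, Int.natAbs_natCast]
    exact le_trans (le_max_left _ _) (le_max_right _ _)
  set l : ℝ := lam n with hldef
  -- l is large
  have hπ1 : (1:ℝ) ≤ π := by linarith [Real.pi_gt_three]
  have hπα : π ^ (α - 1) ≤ 1 :=
    Real.rpow_le_one_of_one_le_of_nonpos hπ1 (by linarith)
  have hπαpos : 0 < π ^ (α - 1) := Real.rpow_pos_of_pos Real.pi_pos _
  have hnα : T + 1 ≤ (n : ℝ) * α := by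
    have h1 : (T + 1) / α ≤ (N : ℝ) := hN
    have h2 : (N : ℝ) ≤ (m : ℝ) := by exact_mod_cast le_trans (le_max_left _ _) le_rfl
    have h3 : (T + 1) / α ≤ (m : ℝ) := le_trans h1 h2
    have h4 : T + 1 ≤ (m : ℝ) * α := by
      rw [div_le_iff₀ hα0] at h3
      linarith
    have : ((n : ℤ) : ℝ) = (m : ℝ) := by simp [hndef]
    rw [this]
    exact h4
  have hlT : T ≤ l := by
    have h1 := hloc n hn0 hnN₀
    rw [abs_le] at h1
    have h2 : (n : ℝ) * α / π ^ (α - 1) - 1 ≤ l := by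
      simp only [hldef]; linarith [h1.1]
    have h3 : (n : ℝ) * α ≤ (n : ℝ) * α / π ^ (α - 1) := by
      rw [le_div_iff₀ hπαpos]
      have hnn : 0 ≤ (n : ℝ) * α := by
        have : (0:ℝ) ≤ (n:ℝ) := by
          simp only [hndef]; positivity
        positivity
      nlinarith
    linarith
  have hlpos : 0 < l := lt_of_lt_of_le (by linarith) hlT
  -- the frequency ω
  set Mb : ℝ := 2 * l * P1 + Q1 with hMdef
  have hgap : K + 2 ≤ l ^ 2 - Mb := by
    simp only [hMdef]
    nlinarith [hlT, hT1, hP1n, hQ1n, hKn]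
  have hpos2 : 0 < l ^ 2 - Mb := by linarith
  set ω : ℝ := Real.sqrt (l ^ 2 - Mb) with hωdef
  have hω2 : ω ^ 2 = l ^ 2 - Mb := Real.sq_sqrt hpos2.le
  have hω : 0 < ω := Real.sqrt_pos.mpr hpos2
  have hωL : π / ω < L := by
    have h1 : π / L < ω := by
      rw [hωdef]
      rw [Real.lt_sqrt (by positivity)]
      simp only [← hKdef]
      linarith
    rw [div_lt_iff₀ hω]
    rw [div_lt_iff₀ hLpos] at h1
    nlinarith
  -- the potential
  set V : ℝ → ℝ := fun x => 2 * l * p x + q x with hVdef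
  have hVb : ∀ x ∈ Set.Icc a b, ω ^ 2 ≤ l ^ 2 - V x := by
    intro x hx
    have hx' := hIccsub' hx
    have h1 : |p x| ≤ P1 := hP1 x hx'
    have h2 : |q x| ≤ Q1 := hQ1 x hx'
    have h3 : V x ≤ Mb := by
      simp only [hVdef, hMdef]
      have := abs_le.mp h1
      have := abs_le.mp h2
      nlinarith
    rw [hω2]
    linarith
  -- derivatives of u = S l
  set u : ℝ → ℝ := S l with hudef
  have hdiff : DifferentiableOn ℝ u (Set.Ioo 0 π) :=
    (hSsmooth l).differentiableOn (by norm_num)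
  have hderiv1 : ContDiffOn ℝ 1 (deriv u) (Set.Ioo 0 π) :=
    (hSsmooth l).deriv_of_isOpen isOpen_Ioo (by norm_num)
  have hdiff2 : DifferentiableOn ℝ (deriv u) (Set.Ioo 0 π) :=
    hderiv1.differentiableOn one_ne_zero
  have hu : ∀ x ∈ Set.Icc a b, HasDerivAt u (deriv u x) x := by
    intro x hx
    exact ((hdiff.differentiableAt (isOpen_Ioo.mem_nhds (hIccsub hx)))).hasDerivAt
  have hu2 : ∀ x ∈ Set.Icc a b,
      HasDerivAt (fun y => y ^ (1 - α) * deriv u y)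
        ((V x - l ^ 2) * u x * x ^ (α - 1)) x := by
    intro x hx
    have hxIoo := hIccsub hx
    have hxpos : 0 < x := hxIoo.1
    have hx1 : HasDerivAt (fun y : ℝ => y ^ (1 - α)) ((1 - α) * x ^ (1 - α - 1)) x :=
      Real.hasDerivAt_rpow_const (Or.inl hxpos.ne')
    have hx2 : HasDerivAt (deriv u) (deriv (deriv u) x) x :=
      (hdiff2.differentiableAt (isOpen_Ioo.mem_nhds hxIoo)).hasDerivAt
    have hprod := hx1.mul hx2
    have hconf : confDeriv α u = fun y => y ^ (1 - α) * deriv u y := rfl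
    have heq := hSeq l x hxIoo
    have hDval : deriv (confDeriv α u) x =
        (1 - α) * x ^ (1 - α - 1) * deriv u x + x ^ (1 - α) * deriv (deriv u) x := by
      rw [hconf]
      exact hprod.deriv
    have hcc : confDeriv α (confDeriv α u) x =
        x ^ (1 - α) * deriv (confDeriv α u) x := rfl
    set D : ℝ :=
      (1 - α) * x ^ (1 - α - 1) * deriv u x + x ^ (1 - α) * deriv (deriv u) x with hDdef
    have h1 : x ^ (1 - α) * D = (V x - l ^ 2) * u x := by
      have : -(x ^ (1 - α) * D) + V x * u x = l ^ 2 * u x := by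
        rw [← hDval]
        simpa only [hVdef, hudef] using (hcc ▸ heq)
      linarith
    have hxx : x ^ (1 - α) * x ^ (α - 1) = 1 := by
      rw [← Real.rpow_add hxpos, show (1 - α) + (α - 1) = 0 by ring, Real.rpow_zero]
    have hD : D = (V x - l ^ 2) * u x * x ^ (α - 1) := by
      have h2 := congrArg (fun t => t * x ^ (α - 1)) h1
      calc D = (x ^ (1 - α) * x ^ (α - 1)) * D := by rw [hxx, one_mul]
        _ = (x ^ (1 - α) * D) * x ^ (α - 1) := by ring
        _ = (V x - l ^ 2) * u x * x ^ (α - 1) := by rw [h1]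
    rw [← hD]
    exact hprod
  -- apply the Sturm argument
  obtain ⟨z, hz, hz0⟩ := sturm_exists_zero (V := V) hα0 ha hab hu hu2 hVb hω
    (by linarith)
  obtain ⟨j, hj, hXj⟩ := hXall n hn0 hnN₀ z (hIccsub hz) hz0
  exact ⟨z, ⟨n, j, hn0, hnN₀, hj, hXj⟩, by rw [Real.dist_eq]; exact hnear z hz⟩
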